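/- Let a ≥ 2 be even. In the game i-Mark({a,2a},{2}), for every odd n, writing n = 3qa + r with 0 ≤ r ≤ 3a−1 (r odd since a is even): if r < a then g(n) = 0; if a < r < 2a then g(n) = 1; and if r > 2a then g(n) = 2. Hence the odd subsequence of the Sprague-Grundy sequence is purely periodic with period 3a. -/
import Mathlib


/-- The minimum excludant of a finite set of naturals. -/
noncomputable def mex (s : Finset ℕ) : ℕ := sInf {k : ℕ | k ∉ s}

/-- Options of the game i-Mark(S,D) from a heap of `n` tokens:
move to `n - s` for `s ∈ S` (with `1 ≤ s ≤ n`), or to `n / d` for `d ∈ D`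
(with `2 ≤ d` and `d ∣ n`, `n ≥ 1`). -/
def iMarkOptions (S D : Finset ℕ) (n : ℕ) : Finset ℕ :=
  ((S.filter (fun s => 1 ≤ s ∧ s ≤ n)).image (fun s => n - s)) ∪
  ((D.filter (fun d => 2 ≤ d ∧ d ∣ n ∧ 1 ≤ n)).image (fun d => n / d))

theorem iMarkOptions_lt {S D : Finset ℕ} {n m : ℕ} (h : m ∈ iMarkOptions S D n) : m < n := by
  simp only [iMarkOptions, Finset.mem_union, Finset.mem_image, Finset.mem_filter] at h
  rcases h with ⟨s, ⟨_, h1, h2⟩, rfl⟩ | ⟨d, ⟨_, h2, hd, hn⟩, rfl⟩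
  · omega
  · exact Nat.div_lt_self hn h2

/-- The Sprague-Grundy value of a heap of `n` tokens in the game i-Mark(S,D). -/
noncomputable def grundy (S D : Finset ℕ) (n : ℕ) : ℕ :=
  mex ((iMarkOptions S D n).attach.image (fun m => grundy S D m.1))
termination_by n
decreasing_by exact iMarkOptions_lt m.2

/-- `misereP S D n` means `n` is a P-position of i-Mark(S,D) under misère convention:
`n` has at least one option and every option is an N-position. -/
def misereP (S D : Finset ℕ) (n : ℕ) : Prop :=
  (iMarkOptions S D n).Nonempty ∧
    ∀ m : {x // x ∈ iMarkOptions S D n}, ¬ misereP S D m.1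
termination_by n
decreasing_by exact iMarkOptions_lt m.2

lemma mex_eq {s : Finset ℕ} {n : ℕ} (h1 : n ∉ s) (h2 : ∀ k < n, k ∈ s) : mex s = n := by
  apply IsLeast.csInf_eq
  constructor
  · exact h1
  · intro k hk
    by_contra h
    exact hk (h2 k (by omega))

lemma grundy_eq (S D : Finset ℕ) (n : ℕ) :
    grundy S D n = mex ((iMarkOptions S D n).image (grundy S D)) := by
  rw [grundy]
  congr 1
  ext x
  simp [Finset.mem_image]

lemma options_odd {a n : ℕ} (ha : 2 ≤ a) (hae : Even a) (hn : Odd n) :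
    iMarkOptions {a, 2*a} {2} n =
      if 2*a ≤ n then {n - a, n - 2*a} else if a ≤ n then {n - a} else ∅ := by
  have h2 : ¬ (2 ∣ n) := by
    rw [Nat.odd_iff] at hn; omega
  ext m
  simp only [iMarkOptions, Finset.mem_union, Finset.mem_image, Finset.mem_filter,
    Finset.mem_insert, Finset.mem_singleton]
  have hfwd : (∃ s, ((s = a ∨ s = 2*a) ∧ 1 ≤ s ∧ s ≤ n) ∧ n - s = m) ∨
      (∃ d, (d = 2 ∧ 2 ≤ d ∧ d ∣ n ∧ 1 ≤ n) ∧ n / d = m) →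
      ((2*a ≤ n ∧ (m = n - a ∨ m = n - 2*a)) ∨
       (¬ 2*a ≤ n ∧ a ≤ n ∧ m = n - a)) := by
    rintro (⟨s, ⟨hs, h1, hsn⟩, rfl⟩ | ⟨d, ⟨rfl, _, hdn, _⟩, rfl⟩)
    · omega
    · exact absurd hdn h2
  split_ifs with hc1 hc2
  · simp only [Finset.mem_insert, Finset.mem_singleton]
    constructor
    · intro h; rcases hfwd h with ⟨_, h⟩ | ⟨h, _⟩; exact h; omega
    · rintro (rfl | rfl)
      · exact Or.inl ⟨a, ⟨Or.inl rfl, by omega, by omega⟩, rfl⟩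
      · exact Or.inl ⟨2*a, ⟨Or.inr rfl, by omega, by omega⟩, rfl⟩
  · simp only [Finset.mem_singleton]
    constructor
    · intro h; rcases hfwd h with ⟨h, _⟩ | ⟨_, _, h⟩; omega; exact h
    · rintro rfl
      exact Or.inl ⟨a, ⟨Or.inl rfl, by omega, by omega⟩, rfl⟩
  · simp only [Finset.notMem_empty, iff_false]
    intro h; rcases hfwd h with ⟨h, _⟩ | ⟨_, h, _⟩ <;> omega

lemma key_lemma (a : ℕ) (ha : 2 ≤ a) (hae : Even a) :
    ∀ n, Odd n → ∀ q r, n = 3 * q * a + r → r < 3 * a →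
      grundy {a, 2*a} {2} n = if r < a then 0 else if r < 2*a then 1 else 2 := by
  intro n
  induction n using Nat.strong_induction_on with
  | _ n IH =>
  intro hn q r hnqr hr
  have ha2 : a % 2 = 0 := Nat.even_iff.mp hae
  have hn2 : n % 2 = 1 := Nat.odd_iff.mp hn
  have hnz : n = 3 * (q * a) + r := by rw [hnqr]; ring
  have hze : Even (3 * (q * a)) := by
    have : Even ((3 * q) * a) := hae.mul_left (3 * q)
    simpa [Nat.mul_assoc] using this
  have hrodd : r % 2 = 1 := by
    rw [Nat.even_iff] at hze; omega
  have hzcases : q * a = 0 ∨ a ≤ q * a := by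
    rcases Nat.eq_zero_or_pos q with rfl | hq
    · left; omega
    · right; exact Nat.le_mul_of_pos_left a hq
  have hz1 : (q - 1) * a = q * a - a := by rw [Nat.sub_mul, one_mul]
  have step : ∀ m q' r', m < n → m % 2 = 1 → m = 3 * (q' * a) + r' → r' < 3 * a →
      grundy {a, 2*a} {2} m = if r' < a then 0 else if r' < 2*a then 1 else 2 := by
    intro m q' r' hlt hodd heq hlt'
    exact IH m hlt (Nat.odd_iff.mpr hodd) q' r' (by rw [heq]; ring) hlt'
  rcases lt_trichotomy r a with hcase | hcase | hcase
  · rw [if_pos hcase]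
    by_cases hna : a ≤ n
    · have hza : a ≤ q * a := by rcases hzcases with h | h <;> omega
      have g1 : grundy {a, 2*a} {2} (n - a) = 2 := by
        have h := step (n - a) (q - 1) (2 * a + r) (by omega) (by omega)
          (by rw [hz1]; omega) (by omega)
        rw [if_neg (by omega), if_neg (by omega)] at h
        exact h
      by_cases h2a : 2 * a ≤ n
      · have g2 : grundy {a, 2*a} {2} (n - 2 * a) = 1 := by
          have h := step (n - 2 * a) (q - 1) (a + r) (by omega) (by omega)
            (by rw [hz1]; omega) (by omega)
          rw [if_neg (by omega), if_pos (by omega)] at h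
          exact h
        rw [grundy_eq, options_odd ha hae hn, if_pos h2a, Finset.image_insert,
          Finset.image_singleton, g1, g2]
        apply mex_eq
        · simp
        · intro k hk; omega
      · rw [grundy_eq, options_odd ha hae hn, if_neg h2a, if_pos hna,
          Finset.image_singleton, g1]
        apply mex_eq
        · simp
        · intro k hk; omega
    · rw [grundy_eq, options_odd ha hae hn, if_neg (by omega), if_neg hna,
        Finset.image_empty]
      apply mex_eq
      · simp
      · intro k hk; omega
  · omega
  · have hna : a ≤ n := by omega
    rcases lt_trichotomy r (2 * a) with hc2 | hc2 | hc2
    · rw [if_neg (by omega), if_pos hc2]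
      have g0 : grundy {a, 2*a} {2} (n - a) = 0 := by
        have h := step (n - a) q (r - a) (by omega) (by omega) (by omega) (by omega)
        rw [if_pos (by omega)] at h
        exact h
      by_cases h2a : 2 * a ≤ n
      · have hza : a ≤ q * a := by rcases hzcases with h | h <;> omega
        have g2 : grundy {a, 2*a} {2} (n - 2 * a) = 2 := by
          have h := step (n - 2 * a) (q - 1) (a + r) (by omega) (by omega)
            (by rw [hz1]; omega) (by omega)
          rw [if_neg (by omega), if_neg (by omega)] at h
          exact h
        rw [grundy_eq, options_odd ha hae hn, if_pos h2a, Finset.image_insert,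
          Finset.image_singleton, g0, g2]
        apply mex_eq
        · simp
        · intro k hk
          have : k = 0 := by omega
          subst this; simp
      · rw [grundy_eq, options_odd ha hae hn, if_neg h2a, if_pos hna,
          Finset.image_singleton, g0]
        apply mex_eq
        · simp
        · intro k hk
          have : k = 0 := by omega
          subst this; simp
    · omega
    · have h2a : 2 * a ≤ n := by omega
      rw [if_neg (by omega), if_neg (by omega)]
      have g1 : grundy {a, 2*a} {2} (n - a) = 1 := by
        have h := step (n - a) q (r - a) (by omega) (by omega) (by omega) (by omega)
        rw [if_neg (by omega), if_pos (by omega)] at h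
        exact h
      have g0 : grundy {a, 2*a} {2} (n - 2 * a) = 0 := by
        have h := step (n - 2 * a) q (r - 2 * a) (by omega) (by omega) (by omega) (by omega)
        rw [if_pos (by omega)] at h
        exact h
      rw [grundy_eq, options_odd ha hae hn, if_pos h2a, Finset.image_insert,
        Finset.image_singleton, g1, g0]
      apply mex_eq
      · simp
      · intro k hk
        interval_cases k <;> simp

/-- The odd subsequence of the Sprague-Grundy sequence of i-Mark({a,2a},{2}), a even,
is purely periodic with period 3a. -/
theorem iMark_a_2a_odd (a : ℕ) (ha : 2 ≤ a) (hae : Even a) :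
    (∀ n q r : ℕ, Odd n → n = 3 * q * a + r → r < 3 * a →
      ((r < a → grundy {a, 2 * a} {2} n = 0) ∧
       (a < r ∧ r < 2 * a → grundy {a, 2 * a} {2} n = 1) ∧
       (2 * a < r → grundy {a, 2 * a} {2} n = 2))) ∧
    (∀ n : ℕ, Odd n → grundy {a, 2 * a} {2} n = grundy {a, 2 * a} {2} (n + 3 * a)) := by
  have ha2 : a % 2 = 0 := Nat.even_iff.mp hae
  constructor
  · intro n q r hn hnqr hr
    have h := key_lemma a ha hae n hn q r hnqr hr
    refine ⟨fun hc => ?_, fun hc => ?_, fun hc => ?_⟩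
    · rw [h, if_pos hc]
    · rw [h, if_neg (by omega), if_pos hc.2]
    · rw [h, if_neg (by omega), if_neg (by omega)]
  · intro n hn
    have h3 : 0 < 3 * a := by omega
    have hd : n = 3 * (n / (3 * a)) * a + n % (3 * a) := by
      rw [show 3 * (n / (3 * a)) * a = 3 * a * (n / (3 * a)) from by ring]
      exact (Nat.div_add_mod n (3 * a)).symm
    have hrlt : n % (3 * a) < 3 * a := Nat.mod_lt n h3
    have hd2 : n + 3 * a = 3 * (n / (3 * a) + 1) * a + n % (3 * a) := by
      rw [show 3 * (n / (3 * a) + 1) * a = 3 * (n / (3 * a)) * a + 3 * a from by ring]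
      conv_lhs => rw [hd]
      ring
    have hno : Odd (n + 3 * a) := by
      rw [Nat.odd_iff] at hn ⊢
      omega
    rw [key_lemma a ha hae n hn _ _ hd hrlt,
      key_lemma a ha hae (n + 3 * a) hno _ _ hd2 hrlt]
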